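/- Let 0 < p, q < 1 with p + q > 1/2, and suppose 1 − m^{-q} ≤ a_{m,t} ≤ 1 for all m and all 1 ≤ t ≤ m. Let s_m(ζ) = Σ_{t=1}^m ζ_t, and let E0 s_m = m/2 and E1 s_m denote its expectations under P0_m and P1_m respectively. Then for any sequence of critical values c'_m satisfying E1 s_m ≤ c'_m ≤ E0 s_m, the power of the sum test is bounded away from 1: limsup_{m→∞} P1_m(s_m ≤ c'_m) < 1. (Proposition 3.3, part 2.) -/

import Mathlib

open MeasureTheory Filter

/-- The uniform distribution on `[0, a]` (for `a > 0`). -/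
noncomputable def unif (a : ℝ) : Measure ℝ :=
  (ENNReal.ofReal a)⁻¹ • volume.restrict (Set.Icc 0 a)

/-- The mixture `(1 - ε)·U[0,1] + ε·U[0,a]`. -/
noncomputable def mix (ε a : ℝ) : Measure ℝ :=
  ENNReal.ofReal (1 - ε) • unif 1 + ENNReal.ofReal ε • unif a

/-- The null law `P0_m`: `m` i.i.d. uniform-`[0,1]` coordinates. -/
noncomputable def nullLaw (m : ℕ) : Measure (Fin m → ℝ) :=
  Measure.pi fun _ => unif 1

/-- The alternative law `P1_m`: independent coordinates, the `t`-th distributed as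
`(1 - ε)·U[0,1] + ε·U[0, a t]`. -/
noncomputable def altLaw (m : ℕ) (ε : ℝ) (a : Fin m → ℝ) : Measure (Fin m → ℝ) :=
  Measure.pi fun t => mix ε (a t)


-- from t2.lean
lemma isProb_unif {a : ℝ} (ha : 0 < a) : IsProbabilityMeasure (unif a) := by
  constructor
  rw [unif, Measure.smul_apply, Measure.restrict_apply MeasurableSet.univ, Set.univ_inter,
    Real.volume_Icc, smul_eq_mul, sub_zero]
  rw [ENNReal.inv_mul_cancel (by simpa using ha) ENNReal.ofReal_ne_top]

lemma isProb_mix {ε a : ℝ} (hε0 : 0 ≤ ε) (hε1 : ε ≤ 1) (ha : 0 < a) :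
    IsProbabilityMeasure (mix ε a) := by
  haveI := isProb_unif ha
  haveI := isProb_unif one_pos
  constructor
  rw [mix, Measure.add_apply, Measure.smul_apply, Measure.smul_apply, measure_univ, measure_univ,
    smul_eq_mul, smul_eq_mul, mul_one, mul_one, ← ENNReal.ofReal_add (by linarith) hε0]
  norm_num

lemma unif_compl_Icc {a : ℝ} (ha0 : 0 < a) (ha1 : a ≤ 1) : unif a (Set.Icc 0 1)ᶜ = 0 := by
  rw [unif, Measure.smul_apply, Measure.restrict_apply (measurableSet_Icc.compl)]
  have : (Set.Icc (0:ℝ) 1)ᶜ ∩ Set.Icc 0 a = ∅ := by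
    ext x; simp only [Set.mem_inter_iff, Set.mem_compl_iff, Set.mem_Icc, Set.mem_empty_iff_false,
      iff_false]
    rintro ⟨h1, h2, h3⟩; exact h1 ⟨h2, h3.trans ha1⟩
  rw [this]; simp

lemma mix_ae_Icc {ε a : ℝ} (ha0 : 0 < a) (ha1 : a ≤ 1) :
    ∀ᵐ y ∂(mix ε a), y ∈ Set.Icc (0:ℝ) 1 := by
  rw [ae_iff]
  have : {y : ℝ | ¬ y ∈ Set.Icc (0:ℝ) 1} = (Set.Icc (0:ℝ) 1)ᶜ := rfl
  rw [this, mix, Measure.add_apply, Measure.smul_apply, Measure.smul_apply,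
    unif_compl_Icc one_pos le_rfl, unif_compl_Icc ha0 ha1]
  simp

-- from t3.lean
lemma integrable_unif {f : ℝ → ℝ} (hf : Continuous f) {a : ℝ} (ha : 0 < a) :
    Integrable f (unif a) := by
  rw [unif]
  exact (hf.integrableOn_Icc).smul_measure (ENNReal.inv_ne_top.mpr (by simpa using ha))

lemma integral_unif {f : ℝ → ℝ} {a : ℝ} (ha : 0 < a) :
    ∫ y, f y ∂unif a = a⁻¹ * ∫ y in Set.Icc 0 a, f y := by
  rw [unif, integral_smul_measure, ENNReal.toReal_inv, ENNReal.toReal_ofReal ha.le]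
  rfl

lemma integral_unif_pow (k : ℕ) {a : ℝ} (ha : 0 < a) :
    ∫ y, y ^ k ∂unif a = a ^ k / (k + 1) := by
  rw [integral_unif ha, MeasureTheory.integral_Icc_eq_integral_Ioc,
    ← intervalIntegral.integral_of_le ha.le, integral_pow]
  field_simp
  ring

lemma integrable_mix {f : ℝ → ℝ} (hf : Continuous f) (ε : ℝ) {a : ℝ} (ha : 0 < a) :
    Integrable f (mix ε a) := by
  rw [mix]
  exact ((integrable_unif hf one_pos).smul_measure ENNReal.ofReal_ne_top).add_measure
    ((integrable_unif hf ha).smul_measure ENNReal.ofReal_ne_top)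

lemma integral_mix {f : ℝ → ℝ} (hf : Continuous f) {ε a : ℝ} (ha : 0 < a) (hε0 : 0 ≤ ε) (hε1 : ε ≤ 1) :
    ∫ y, f y ∂mix ε a = (1 - ε) * ∫ y, f y ∂unif 1 + ε * ∫ y, f y ∂unif a := by
  rw [mix, integral_add_measure ((integrable_unif hf one_pos).smul_measure ENNReal.ofReal_ne_top)
    ((integrable_unif hf ha).smul_measure ENNReal.ofReal_ne_top),
    integral_smul_measure, integral_smul_measure, ENNReal.toReal_ofReal (by linarith),
    ENNReal.toReal_ofReal hε0, smul_eq_mul, smul_eq_mul]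

lemma integral_mix_pow (k : ℕ) {ε a : ℝ} (hε0 : 0 ≤ ε) (hε1 : ε ≤ 1) (ha : 0 < a) :
    ∫ y, y ^ k ∂mix ε a = ((1 - ε) + ε * a ^ k) / (k + 1) := by
  rw [integral_mix (by continuity) ha hε0 hε1, integral_unif_pow k ha, integral_unif_pow k one_pos]
  rw [one_pow]
  ring

-- from t11.lean
lemma mix_mean {ε a : ℝ} (hε0 : 0 ≤ ε) (hε1 : ε ≤ 1) (ha : 0 < a) :
    ∫ y, y ∂mix ε a = ((1 - ε) + ε * a)/2 := by
  have h := integral_mix_pow 1 hε0 hε1 ha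
  simp only [pow_one] at h
  rw [h]
  norm_num

lemma mix_centered_mean {ε a : ℝ} (hε0 : 0 ≤ ε) (hε1 : ε ≤ 1) (ha : 0 < a) :
    ∫ y, (y - ((1 - ε) + ε * a)/2) ∂mix ε a = 0 := by
  haveI := isProb_mix hε0 hε1 ha
  have hid : Integrable (fun y : ℝ => y) (mix ε a) := integrable_mix (by continuity) ε ha
  rw [integral_sub hid (integrable_const _), integral_const, probReal_univ]
  have := mix_mean hε0 hε1 ha
  simp [this]

lemma mix_centered_sq {ε a : ℝ} (hε0 : 0 ≤ ε) (hε1 : ε ≤ 1) (ha : 0 < a) :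
    ∫ y, (y - ((1 - ε) + ε * a)/2)^2 ∂mix ε a
      = ((1 - ε) + ε * a^2)/3 - (((1 - ε) + ε * a)/2)^2 := by
  haveI := isProb_mix hε0 hε1 ha
  set c := ((1 - ε) + ε * a)/2 with hc
  have he : (fun y : ℝ => (y - c)^2) = fun y => (y^2 - (2*c)*y) + c^2 := by
    funext y; ring
  have h1 : Integrable (fun y : ℝ => y^2) (mix ε a) := integrable_mix (by continuity) ε ha
  have h2 : Integrable (fun y : ℝ => (2*c)*y) (mix ε a) := integrable_mix (by continuity) ε ha
  have h12 : Integrable (fun y : ℝ => y^2 - (2*c)*y) (mix ε a) :=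
    integrable_mix (by continuity) ε ha
  rw [he, integral_add h12 (integrable_const _), integral_sub h1 h2,
    integral_const_mul, integral_const, probReal_univ]
  have hm := mix_mean hε0 hε1 ha
  have hm2 := integral_mix_pow 2 hε0 hε1 ha
  rw [hm2, hm]
  simp only [ENNReal.toReal_one, smul_eq_mul, one_mul]
  push_cast
  ring

lemma mix_var_lb {ε a : ℝ} (hε0 : 0 ≤ ε) (hε2 : ε ≤ 1/2) (ha0 : 1/2 ≤ a) (ha1 : a ≤ 1) :
    1/24 ≤ ∫ y, (y - ((1 - ε) + ε * a)/2)^2 ∂mix ε a := by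
  rw [mix_centered_sq hε0 (by linarith) (by linarith)]
  have key : ((1 - ε) + ε * a^2)/3 - (((1 - ε) + ε * a)/2)^2
      = (1-ε)/12 + ε*a^2/12 + ε*(1-ε)*(1-a)^2/4 := by ring
  rw [key]
  have h1 : 0 ≤ ε*a^2/12 := by positivity
  have h2 : 0 ≤ ε*(1-ε)*(1-a)^2/4 := by
    have : (0:ℝ) ≤ 1 - ε := by linarith
    positivity
  linarith

-- from t5.lean
lemma my_cs {Ω : Type*} [MeasurableSpace Ω] (μ : Measure Ω) (u v : Ω → ℝ)
    (hu : Integrable (fun ω => (u ω)^2) μ) (hv : Integrable (fun ω => (v ω)^2) μ)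
    (huv : Integrable (fun ω => u ω * v ω) μ) :
    (∫ ω, u ω * v ω ∂μ)^2 ≤ (∫ ω, (u ω)^2 ∂μ) * (∫ ω, (v ω)^2 ∂μ) := by
  set A := ∫ ω, (u ω)^2 ∂μ with hA
  set B := ∫ ω, (v ω)^2 ∂μ with hB
  set I := ∫ ω, u ω * v ω ∂μ with hI
  have hA0 : 0 ≤ A := integral_nonneg fun ω => sq_nonneg _
  have hB0 : 0 ≤ B := integral_nonneg fun ω => sq_nonneg _
  have key : ∀ l : ℝ, 0 ≤ l^2 * A - 2 * l * I + B := by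
    intro l
    have h1 : 0 ≤ ∫ ω, (l * u ω - v ω)^2 ∂μ := integral_nonneg fun ω => sq_nonneg _
    have e1 : Integrable (fun ω => l ^ 2 * u ω ^ 2 - 2 * l * (u ω * v ω)) μ := by
      exact (hu.const_mul _).sub (huv.const_mul _)
    have e2 : Integrable (fun ω => l ^ 2 * u ω ^ 2) μ := hu.const_mul _
    have e3 : Integrable (fun ω => 2 * l * (u ω * v ω)) μ := huv.const_mul _
    have h2 : ∫ ω, (l * u ω - v ω)^2 ∂μ = l^2 * A - 2 * l * I + B := by
      have h3 : (fun ω => (l * u ω - v ω)^2)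
          = fun ω => (l^2 * (u ω)^2 - 2 * l * (u ω * v ω)) + (v ω)^2 := by
        funext ω; ring
      rw [h3, integral_add e1 hv, integral_sub e2 e3, integral_const_mul, integral_const_mul]
    linarith [h2 ▸ h1]
  rcases eq_or_lt_of_le hA0 with h | h
  · rcases eq_or_ne I 0 with hI0 | hI0
    · rw [hI0]; simpa using mul_nonneg hA0 hB0
    · exfalso
      have h1 := key (B / I)
      have h2 := key (2 * B / I + 1 / I)
      rw [← h] at h1 h2
      field_simp at h1 h2
      rcases lt_trichotomy I 0 with hl | hl | hl
      · have hI2 : (0:ℝ) < I^2 := by positivity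
        rw [le_div_iff₀ hI2] at h1 h2; nlinarith
      · exact hI0 hl
      · have hI2 : (0:ℝ) < I^2 := by positivity
        rw [le_div_iff₀ hI2] at h1 h2; nlinarith
  · have hk := key (I / A)
    have h2 : (I/A)^2 * A - 2 * (I/A) * I + B = B - I^2/A := by field_simp; ring
    rw [h2] at hk
    have h3 : I^2 / A ≤ B := by linarith
    calc I^2 = (I^2/A) * A := by field_simp
    _ ≤ B * A := mul_le_mul_of_nonneg_right h3 h.le
    _ = A * B := mul_comm _ _

-- from t6.lean
lemma int_of_bdd {Ω : Type*} [MeasurableSpace Ω] {μ : Measure Ω} [IsFiniteMeasure μ] {f : Ω → ℝ}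
    (hf : Measurable f) {C : ℝ} (h : ∀ᵐ ω ∂μ, |f ω| ≤ C) : Integrable f μ :=
  (integrable_const C).mono' hf.aestronglyMeasurable (by simpa [Real.norm_eq_abs] using h)

lemma tail_lb {Ω : Type*} [MeasurableSpace Ω] {μ : Measure Ω} [IsProbabilityMeasure μ]
    {X : Ω → ℝ} (hX : Measurable X) {C : ℝ} (hb : ∀ᵐ ω ∂μ, |X ω| ≤ C)
    (hmean : ∫ ω, X ω ∂μ = 0) {t : ℝ} (ht0 : 0 ≤ t)
    (ht : 2 * t ≤ ∫ ω, |X ω| ∂μ) :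
    ((∫ ω, |X ω| ∂μ)/2 - t)^2
      ≤ (∫ ω, (X ω)^2 ∂μ) * (μ {ω | t < X ω}).toReal := by
  set s : Set Ω := {ω | t < X ω} with hs
  have hsm : MeasurableSet s := measurableSet_lt measurable_const hX
  set i : Ω → ℝ := s.indicator (fun _ => 1) with hi
  have hiv : ∀ ω, i ω = if t < X ω then 1 else 0 := by
    intro ω
    by_cases h : t < X ω
    · simp [hi, Set.indicator_of_mem, h, hs, Set.mem_setOf_eq]
    · simp [hi, Set.indicator_of_notMem, h, hs, Set.mem_setOf_eq]
  have him : Measurable i := Measurable.indicator measurable_const hsm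
  -- integrability
  have hXi : Integrable X μ := int_of_bdd hX hb
  have hXa : Integrable (fun ω => |X ω|) μ := hXi.abs
  have hC0 : 0 ≤ C := by
    obtain ⟨ω, hω⟩ := hb.exists
    exact (abs_nonneg _).trans hω
  have hX2 : Integrable (fun ω => (X ω)^2) μ := by
    refine int_of_bdd (hX.pow_const 2) (C := C^2) ?_
    filter_upwards [hb] with ω hω
    rw [abs_pow]
    exact pow_le_pow_left₀ (abs_nonneg _) hω 2
  have hi2 : Integrable (fun ω => (i ω)^2) μ := by
    refine int_of_bdd (him.pow_const 2) (C := 1) ?_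
    refine Eventually.of_forall fun ω => ?_
    rw [hiv ω]; by_cases h : t < X ω <;> simp [h]
  have hXmuli : Integrable (fun ω => X ω * i ω) μ := by
    refine int_of_bdd (hX.mul him) (C := C) ?_
    filter_upwards [hb] with ω hω
    rw [abs_mul, hiv ω]
    by_cases h : t < X ω <;> simp [h]
    · exact hω
    · positivity
  -- pointwise key
  have key : ∀ ω, (|X ω| + X ω)/2 - t ≤ X ω * i ω := by
    intro ω
    rw [hiv ω]
    by_cases h : t < X ω
    · rw [abs_of_pos (lt_of_le_of_lt ht0 h)]
      simp only [if_pos h, mul_one]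
      linarith
    · push_neg at h
      simp only [if_neg (not_lt.mpr h), mul_zero]
      rcases le_or_gt 0 (X ω) with h2 | h2
      · rw [abs_of_nonneg h2]; linarith
      · rw [abs_of_neg h2]; linarith
  -- integrate key
  have hlhs : Integrable (fun ω => (|X ω| + X ω)/2 - t) μ := by
    exact ((hXa.add hXi).div_const 2).sub (integrable_const t)
  have h1 : (∫ ω, |X ω| ∂μ)/2 - t ≤ ∫ ω, X ω * i ω ∂μ := by
    have hadd : Integrable (fun ω => (|X ω| + X ω)/2) μ := by
      exact (hXa.add hXi).div_const 2
    have haddXi : Integrable (fun ω => |X ω| + X ω) μ := hXa.add hXi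
    have := integral_mono hlhs hXmuli key
    rw [integral_sub hadd (integrable_const t), integral_div,
      integral_add hXa hXi, hmean, integral_const] at this
    simpa using this
  -- CS
  have h2 := my_cs μ X i hX2 hi2 hXmuli
  have h3 : ∫ ω, (i ω)^2 ∂μ = (μ s).toReal := by
    have : (fun ω => (i ω)^2) = i := by
      funext ω; rw [hiv ω]; by_cases h : t < X ω <;> simp [h]
    rw [this, hi, integral_indicator_const _ hsm]
    simp; rfl
  rw [h3] at h2
  have h4 : 0 ≤ (∫ ω, |X ω| ∂μ)/2 - t := by linarith
  calc ((∫ ω, |X ω| ∂μ)/2 - t)^2 ≤ (∫ ω, X ω * i ω ∂μ)^2 := by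
        exact pow_le_pow_left₀ h4 h1 2
  _ ≤ (∫ ω, (X ω)^2 ∂μ) * (μ s).toReal := h2

-- from t8.lean
lemma integral_pi_prod {m : ℕ} (μ : Fin m → Measure ℝ) [h : ∀ t, IsProbabilityMeasure (μ t)]
    (f : Fin m → ℝ → ℝ) :
    ∫ x : Fin m → ℝ, (∏ t, f t (x t)) ∂Measure.pi μ = ∏ t, ∫ y, f t y ∂μ t := by
  have := MeasureTheory.integral_fintype_prod_eq_prod (μ := μ) f
  exact this

lemma pi_eval_ae {m : ℕ} (μ : Fin m → Measure ℝ) [∀ t, IsProbabilityMeasure (μ t)]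
    {s : Fin m → Set ℝ} (hs : ∀ t, MeasurableSet (s t)) (h : ∀ t, ∀ᵐ y ∂μ t, y ∈ s t) :
    ∀ᵐ x ∂Measure.pi μ, ∀ t, x t ∈ s t := by
  rw [MeasureTheory.ae_all_iff]
  intro t
  rw [ae_iff]
  have he : {x : Fin m → ℝ | ¬ x t ∈ s t}
      = Set.univ.pi (Function.update (fun _ => Set.univ) t (s t)ᶜ) := by
    ext x
    simp only [Set.mem_setOf_eq, Set.mem_univ_pi, Function.update_apply]
    constructor
    · intro hx i
      by_cases hi : i = t
      · subst hi; simp [hx]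
      · simp [hi]
    · intro hx
      have := hx t
      simp at this
      exact this
  rw [he, Measure.pi_pi]
  refine Finset.prod_eq_zero (Finset.mem_univ t) ?_
  rw [Function.update_self]
  have := h t
  rw [ae_iff] at this
  exact this

lemma integral_pi_eval {m : ℕ} (μ : Fin m → Measure ℝ) [∀ t, IsProbabilityMeasure (μ t)]
    (t : Fin m) :
    ∫ x : Fin m → ℝ, x t ∂Measure.pi μ = ∫ y, y ∂μ t := by
  have h1 : (fun x : Fin m → ℝ => x t) = fun x => ∏ s, (if t = s then x s else 1) := by
    funext x
    rw [Finset.prod_ite_eq]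
    simp
  rw [h1, integral_pi_prod μ (fun s y => if t = s then y else 1)]
  have h2 : ∀ s, ∫ y, (if t = s then y else 1) ∂μ s = if t = s then ∫ y, y ∂μ s else 1 := by
    intro s
    by_cases h : t = s <;> simp [h]
  rw [Finset.prod_congr rfl fun s _ => h2 s, Finset.prod_ite_eq]
  simp

-- from t7.lean
lemma pairing_cases {α : Type*} [DecidableEq α] (i j k l : α)
    (h : ¬((i=j ∧ k=l) ∨ (i=k ∧ j=l) ∨ (i=l ∧ j=k))) :
    ∃ t, ((if i = t then 1 else 0) + (if j = t then 1 else 0)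
      + (if k = t then 1 else 0) + (if l = t then 1 else 0) : ℕ) = 1 := by
  by_cases hij : i = j
  · by_cases hkl : k = l
    · exact absurd (Or.inl ⟨hij, hkl⟩) h
    · by_cases hik : i = k
      · refine ⟨l, ?_⟩
        have h1 : ¬ i = l := fun he => hkl (hik.symm.trans he)
        have h2 : ¬ j = l := fun he => h1 (hij.trans he)
        simp [h1, h2, hkl]
      · refine ⟨k, ?_⟩
        have h2 : ¬ j = k := fun he => hik (hij.trans he)
        have h3 : ¬ l = k := fun he => hkl he.symm
        simp [hik, h2, h3]
  · by_cases hik : i = k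
    · by_cases hjl : j = l
      · exact absurd (Or.inr (Or.inl ⟨hik, hjl⟩)) h
      · by_cases hil : i = l
        · refine ⟨j, ?_⟩
          have h2 : ¬ k = j := fun he => hij (hik.trans he)
          have h3 : ¬ l = j := fun he => hij (hil.trans he)
          simp [hij, h2, h3]
        · refine ⟨l, ?_⟩
          have h3 : ¬ k = l := fun he => hil (hik.trans he)
          simp [hil, hjl, h3]
    · by_cases hil : i = l
      · by_cases hjk : j = k
        · exact absurd (Or.inr (Or.inr ⟨hil, hjk⟩)) h
        · refine ⟨k, ?_⟩
          have h3 : ¬ l = k := fun he => hik (hil.trans he)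
          simp [hik, hjk, h3]
      · refine ⟨i, ?_⟩
        have h1 : ¬ j = i := fun he => hij he.symm
        have h2 : ¬ k = i := fun he => hik he.symm
        have h3 : ¬ l = i := fun he => hil he.symm
        simp [h1, h2, h3]

-- from t10.lean
section moments

variable {m : ℕ} (μ : Fin m → Measure ℝ) [∀ t, IsProbabilityMeasure (μ t)]
  (g : Fin m → ℝ → ℝ)

lemma prod_pow_single (w : Fin m → ℝ) (i : Fin m) :
    ∏ t, (w t)^(if i = t then 1 else 0) = w i := by
  simp only [pow_ite, pow_one, pow_zero]
  rw [Finset.prod_ite_eq]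
  simp

/-- moments bounded by one -/
lemma moment_bdd (hgb : ∀ t, ∀ᵐ y ∂μ t, |g t y| ≤ 1) (t : Fin m) (k : ℕ) :
    |∫ y, (g t y)^k ∂μ t| ≤ 1 := by
  have h := norm_integral_le_of_norm_le_const (μ := μ t) (f := fun y => (g t y)^k) (C := 1) ?_
  · simpa using h
  · filter_upwards [hgb t] with y hy
    rw [Real.norm_eq_abs, abs_pow]
    exact pow_le_one₀ (abs_nonneg _) hy

lemma my_integral_quad (i j k l : Fin m) :
    ∫ x : Fin m → ℝ, g i (x i) * g j (x j) * g k (x k) * g l (x l) ∂Measure.pi μ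
      = ∏ t, ∫ y, (g t y)^((if i = t then 1 else 0) + (if j = t then 1 else 0)
          + (if k = t then 1 else 0) + (if l = t then 1 else 0)) ∂μ t := by
  have hpt : (fun x : Fin m → ℝ => g i (x i) * g j (x j) * g k (x k) * g l (x l))
      = fun x => ∏ t, (g t (x t))^((if i = t then 1 else 0) + (if j = t then 1 else 0)
          + (if k = t then 1 else 0) + (if l = t then 1 else 0)) := by
    funext x
    simp only [pow_add, Finset.prod_mul_distrib, prod_pow_single]
  rw [hpt]
  exact integral_pi_prod μ (fun t y => (g t y)^((if i = t then 1 else 0) + (if j = t then 1 else 0)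
          + (if k = t then 1 else 0) + (if l = t then 1 else 0)))

lemma my_integral_pair (i j : Fin m) :
    ∫ x : Fin m → ℝ, g i (x i) * g j (x j) ∂Measure.pi μ
      = ∏ t, ∫ y, (g t y)^((if i = t then 1 else 0) + (if j = t then 1 else 0)) ∂μ t := by
  have hpt : (fun x : Fin m → ℝ => g i (x i) * g j (x j))
      = fun x => ∏ t, (g t (x t))^((if i = t then 1 else 0) + (if j = t then 1 else 0)) := by
    funext x
    simp only [pow_add, Finset.prod_mul_distrib, prod_pow_single]
  rw [hpt]
  exact integral_pi_prod μ (fun t y => (g t y)^((if i = t then 1 else 0) + (if j = t then 1 else 0)))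

end moments

section moments2

variable {m : ℕ} (μ : Fin m → Measure ℝ) [∀ t, IsProbabilityMeasure (μ t)]
  (g : Fin m → ℝ → ℝ)

lemma abs_mul_le_one {a b : ℝ} (ha : |a| ≤ 1) (hb : |b| ≤ 1) : |a * b| ≤ 1 := by
  rw [abs_mul]
  calc |a| * |b| ≤ 1 * 1 := mul_le_mul ha hb (abs_nonneg _) zero_le_one
  _ = 1 := mul_one 1

lemma sq_moment (hg : ∀ t, Measurable (g t)) (hg0 : ∀ t, ∫ y, g t y ∂μ t = 0)
    (hgb : ∀ t, ∀ᵐ y ∂μ t, |g t y| ≤ 1) :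
    ∫ x : Fin m → ℝ, (∑ t, g t (x t))^2 ∂Measure.pi μ = ∑ t, ∫ y, (g t y)^2 ∂μ t := by
  have hae : ∀ᵐ x ∂Measure.pi μ, ∀ t, |g t (x t)| ≤ 1 :=
    pi_eval_ae μ (s := fun t => {y | |g t y| ≤ 1})
      (fun t => measurableSet_le (hg t).abs measurable_const) hgb
  have hint : ∀ i j, Integrable (fun x : Fin m → ℝ => g i (x i) * g j (x j)) (Measure.pi μ) := by
    intro i j
    refine int_of_bdd (((hg i).comp (measurable_pi_apply i)).mul
      ((hg j).comp (measurable_pi_apply j))) (C := 1) ?_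
    filter_upwards [hae] with x hx
    exact abs_mul_le_one (hx i) (hx j)
  have hexp : (fun x : Fin m → ℝ => (∑ t, g t (x t))^2)
      = fun x => ∑ i, ∑ j, g i (x i) * g j (x j) := by
    funext x; rw [sq, Finset.sum_mul_sum]
  rw [hexp, integral_finset_sum _ (fun i _ => integrable_finset_sum _ (fun j _ => hint i j))]
  refine Finset.sum_congr rfl fun i _ => ?_
  rw [integral_finset_sum _ (fun j _ => hint i j)]
  have hterm : ∀ j, ∫ x : Fin m → ℝ, g i (x i) * g j (x j) ∂Measure.pi μ
      = if i = j then ∫ y, (g i y)^2 ∂μ i else 0 := by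
    intro j
    rw [my_integral_pair μ g i j]
    by_cases hij : i = j
    · subst hij
      simp only [if_pos rfl]
      have hfac : ∀ t, ∫ y, (g t y)^((if i = t then 1 else 0) + (if i = t then 1 else 0)) ∂μ t
          = if i = t then ∫ y, (g t y)^2 ∂μ t else 1 := by
        intro t; by_cases h : i = t
        · norm_num [h]
        · simp [h]
      rw [Finset.prod_congr rfl fun t _ => hfac t, Finset.prod_ite_eq]
      simp
    · simp only [if_neg hij]
      refine Finset.prod_eq_zero (Finset.mem_univ i) ?_
      have hji : ¬ j = i := fun h => hij h.symm
      have he : ((if i = i then 1 else 0) + (if j = i then 1 else 0) : ℕ) = 1 := by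
        simp [hji]
      rw [he, ]
      simpa using hg0 i
  rw [Finset.sum_congr rfl fun j _ => hterm j, Finset.sum_ite_eq]
  simp

set_option maxHeartbeats 1000000 in
lemma quad_moment (hg : ∀ t, Measurable (g t)) (hg0 : ∀ t, ∫ y, g t y ∂μ t = 0)
    (hgb : ∀ t, ∀ᵐ y ∂μ t, |g t y| ≤ 1) :
    ∫ x : Fin m → ℝ, (∑ t, g t (x t))^4 ∂Measure.pi μ ≤ 3 * (m:ℝ)^2 := by
  have hae : ∀ᵐ x ∂Measure.pi μ, ∀ t, |g t (x t)| ≤ 1 :=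
    pi_eval_ae μ (s := fun t => {y | |g t y| ≤ 1})
      (fun t => measurableSet_le (hg t).abs measurable_const) hgb
  have hint : ∀ i j k l, Integrable
      (fun x : Fin m → ℝ => g i (x i) * g j (x j) * g k (x k) * g l (x l)) (Measure.pi μ) := by
    intro i j k l
    refine int_of_bdd ((((hg i).comp (measurable_pi_apply i)).mul
      ((hg j).comp (measurable_pi_apply j))).mul
      ((hg k).comp (measurable_pi_apply k)) |>.mul
      ((hg l).comp (measurable_pi_apply l))) (C := 1) ?_
    filter_upwards [hae] with x hx
    exact abs_mul_le_one (abs_mul_le_one (abs_mul_le_one (hx i) (hx j)) (hx k)) (hx l)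
  have hexp : (fun x : Fin m → ℝ => (∑ t, g t (x t))^4)
      = fun x => ∑ i, ∑ j, ∑ k, ∑ l, g i (x i) * g j (x j) * g k (x k) * g l (x l) := by
    funext x
    have h4 : (∑ t, g t (x t))^4 = (((∑ i, g i (x i)) * (∑ j, g j (x j)))
        * (∑ k, g k (x k))) * (∑ l, g l (x l)) := by ring
    rw [h4]
    simp only [Finset.sum_mul, Finset.mul_sum]
    exact Finset.sum_congr rfl fun i _ => Finset.sum_congr rfl fun j _ =>
      Finset.sum_congr rfl fun k _ => Finset.sum_congr rfl fun l _ => by ring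
  rw [hexp, integral_finset_sum _ (fun i _ => integrable_finset_sum _ fun j _ =>
    integrable_finset_sum _ fun k _ => integrable_finset_sum _ fun l _ => hint i j k l)]
  have hiter : ∀ i, ∫ x : Fin m → ℝ,
      (∑ j, ∑ k, ∑ l, g i (x i) * g j (x j) * g k (x k) * g l (x l)) ∂Measure.pi μ
      = ∑ j, ∑ k, ∑ l, ∫ x : Fin m → ℝ,
          g i (x i) * g j (x j) * g k (x k) * g l (x l) ∂Measure.pi μ := by
    intro i
    rw [integral_finset_sum _ (fun j _ => integrable_finset_sum _ fun k _ =>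
      integrable_finset_sum _ fun l _ => hint i j k l)]
    refine Finset.sum_congr rfl fun j _ => ?_
    rw [integral_finset_sum _ (fun k _ => integrable_finset_sum _ fun l _ => hint i j k l)]
    exact Finset.sum_congr rfl fun k _ => integral_finset_sum _ fun l _ => hint i j k l
  rw [Finset.sum_congr rfl fun i _ => hiter i]
  have hTB : ∀ i j k l, ∫ x : Fin m → ℝ,
      g i (x i) * g j (x j) * g k (x k) * g l (x l) ∂Measure.pi μ
      ≤ (if i=j ∧ k=l then (1:ℝ) else 0) + (if i=k ∧ j=l then 1 else 0)
        + (if i=l ∧ j=k then 1 else 0) := by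
    intro i j k l
    have nn : ∀ (P : Prop) [Decidable P], (0:ℝ) ≤ if P then 1 else 0 := by
      intro P _; split_ifs <;> norm_num
    by_cases hp : (i=j ∧ k=l) ∨ (i=k ∧ j=l) ∨ (i=l ∧ j=k)
    · have hT1 : ∫ x : Fin m → ℝ,
          g i (x i) * g j (x j) * g k (x k) * g l (x l) ∂Measure.pi μ ≤ 1 := by
        rw [my_integral_quad μ g i j k l]
        calc (∏ t, ∫ y, (g t y)^((if i = t then 1 else 0) + (if j = t then 1 else 0)
            + (if k = t then 1 else 0) + (if l = t then 1 else 0)) ∂μ t)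
            ≤ |∏ t, ∫ y, (g t y)^((if i = t then 1 else 0) + (if j = t then 1 else 0)
            + (if k = t then 1 else 0) + (if l = t then 1 else 0)) ∂μ t| := le_abs_self _
        _ = ∏ t, |∫ y, (g t y)^((if i = t then 1 else 0) + (if j = t then 1 else 0)
            + (if k = t then 1 else 0) + (if l = t then 1 else 0)) ∂μ t| := Finset.abs_prod _ _
        _ ≤ 1 := Finset.prod_le_one (fun t _ => abs_nonneg _)
            (fun t _ => moment_bdd μ g hgb t _)
      rcases hp with h | h | h
      · rw [if_pos h]; linarith [nn (i=k ∧ j=l), nn (i=l ∧ j=k)]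
      · rw [if_pos h]; linarith [nn (i=j ∧ k=l), nn (i=l ∧ j=k)]
      · rw [if_pos h]; linarith [nn (i=j ∧ k=l), nn (i=k ∧ j=l)]
    · have hT0 : ∫ x : Fin m → ℝ,
          g i (x i) * g j (x j) * g k (x k) * g l (x l) ∂Measure.pi μ = 0 := by
        rw [my_integral_quad μ g i j k l]
        obtain ⟨t, ht⟩ := pairing_cases i j k l hp
        refine Finset.prod_eq_zero (Finset.mem_univ t) ?_
        rw [ht]
        simpa using hg0 t
      simp only [not_or] at hp
      rw [hT0, if_neg hp.1, if_neg hp.2.1, if_neg hp.2.2]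
      norm_num
  calc (∑ i, ∑ j, ∑ k, ∑ l, ∫ x : Fin m → ℝ,
      g i (x i) * g j (x j) * g k (x k) * g l (x l) ∂Measure.pi μ)
      ≤ ∑ i : Fin m, ∑ j : Fin m, ∑ k : Fin m, ∑ l : Fin m,
        ((if i=j ∧ k=l then (1:ℝ) else 0) + (if i=k ∧ j=l then 1 else 0)
          + (if i=l ∧ j=k then 1 else 0)) :=
        Finset.sum_le_sum fun i _ => Finset.sum_le_sum fun j _ =>
          Finset.sum_le_sum fun k _ => Finset.sum_le_sum fun l _ => hTB i j k l
  _ ≤ 3 * (m:ℝ)^2 := by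
      have hsplit : ∀ (i j k l : Fin m), ((if i=j ∧ k=l then (1:ℝ) else 0)
          + (if i=k ∧ j=l then 1 else 0) + (if i=l ∧ j=k then 1 else 0))
          = ((if i = j then (1:ℝ) else 0) * (if k = l then 1 else 0)
          + (if i = k then 1 else 0) * (if j = l then 1 else 0)
          + (if i = l then 1 else 0) * (if j = k then 1 else 0)) := by
        intro i j k l
        split_ifs <;> norm_num <;> tauto
      simp only [hsplit]
      have : ∑ i : Fin m, ∑ j : Fin m, ∑ k : Fin m, ∑ l : Fin m,
          ((if i = j then (1:ℝ) else 0) * (if k = l then 1 else 0)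
          + (if i = k then 1 else 0) * (if j = l then 1 else 0)
          + (if i = l then 1 else 0) * (if j = k then 1 else 0)) = 3 * (m:ℝ)^2 := by
        simp [Finset.sum_add_distrib, Finset.mul_sum, Finset.sum_ite_eq, Finset.sum_ite_eq']
        ring
      rw [this]

end moments2

-- from t13.lean
lemma numer1 (mR A1 A2 A3 A4 tv : ℝ) (hm1 : 1 ≤ mR)
    (hA2lb : mR/24 ≤ A2) (hA4ub : A4 ≤ 3*mR^2)
    (hA10 : 0 ≤ A1) (hA30 : 0 ≤ A3) (hA40 : 0 ≤ A4)
    (hcs1 : A2^2 ≤ A1*A3) (hcs2 : A3^2 ≤ A2*A4)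
    (htv0 : 0 ≤ tv) (htv2 : 4*tv^2 ≤ mR/221184) : 4*tv ≤ A1 := by
  have hm0 : (0:ℝ) < mR := by linarith
  have hA20 : (0:ℝ) < A2 := lt_of_lt_of_le (by positivity) hA2lb
  have hA3pos : (0:ℝ) < A3 := by
    by_contra h
    push_neg at h
    nlinarith [mul_nonpos_of_nonneg_of_nonpos hA10 h, hcs1, pow_pos hA20 2]
  have hA4pos : (0:ℝ) < A4 := by
    by_contra h
    push_neg at h
    nlinarith [mul_nonpos_of_nonneg_of_nonpos hA20.le h, hcs2, pow_pos hA3pos 2]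
  have hkey : A2^4 ≤ A1^2 * (A2 * A4) := by
    calc A2^4 = (A2^2)^2 := by ring
    _ ≤ (A1*A3)^2 := pow_le_pow_left₀ (sq_nonneg A2) hcs1 2
    _ = A1^2 * A3^2 := by ring
    _ ≤ A1^2 * (A2*A4) := mul_le_mul_of_nonneg_left hcs2 (sq_nonneg A1)
  have e1 : 16*tv^2 ≤ mR/55296 := by nlinarith [htv2]
  have e2 : 16*tv^2*A4 ≤ (mR/55296)*(3*mR^2) := mul_le_mul e1 hA4ub hA40 (by positivity)
  have e3 : (mR/24)^3 ≤ A2^3 := pow_le_pow_left₀ (by positivity) hA2lb 3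
  have h16 : 16*tv^2*A4 ≤ A2^3 := by nlinarith [e2, e3]
  have h17 : 16*tv^2*(A2*A4) ≤ A1^2*(A2*A4) := by
    nlinarith [mul_le_mul_of_nonneg_left h16 hA20.le, hkey]
  have h18 : 16*tv^2 ≤ A1^2 :=
    le_of_mul_le_mul_right (by nlinarith [h17]) (mul_pos hA20 hA4pos)
  nlinarith [h18, htv0, hA10]

lemma numer2 (mR A1 A2 A3 A4 tv P : ℝ) (hm1 : 1 ≤ mR)
    (hA2lb : mR/24 ≤ A2) (hA4ub : A4 ≤ 3*mR^2)
    (hA10 : 0 ≤ A1) (hA30 : 0 ≤ A3) (hA40 : 0 ≤ A4) (hP0 : 0 ≤ P)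
    (hcs1 : A2^2 ≤ A1*A3) (hcs2 : A3^2 ≤ A2*A4)
    (htv0 : 0 ≤ tv) (h4t : 4*tv ≤ A1)
    (htail : (A1/2 - tv)^2 ≤ A2 * P) : 1/27648 ≤ P := by
  have hm0 : (0:ℝ) < mR := by linarith
  have hA20 : (0:ℝ) < A2 := lt_of_lt_of_le (by positivity) hA2lb
  have hkey : A2^4 ≤ A1^2 * (A2 * A4) := by
    calc A2^4 = (A2^2)^2 := by ring
    _ ≤ (A1*A3)^2 := pow_le_pow_left₀ (sq_nonneg A2) hcs1 2
    _ = A1^2 * A3^2 := by ring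
    _ ≤ A1^2 * (A2*A4) := mul_le_mul_of_nonneg_left hcs2 (sq_nonneg A1)
  have hq0 : A1/4 ≤ A1/2 - tv := by linarith
  have hq1 : A1^2/16 ≤ A2 * P := by
    have := pow_le_pow_left₀ (by positivity : (0:ℝ) ≤ A1/4) hq0 2
    nlinarith [this, htail]
  have hq2 : A2^4 ≤ 16*(A2*P)*(A2*A4) := by
    nlinarith [mul_le_mul_of_nonneg_right (show A1^2 ≤ 16*(A2*P) by linarith)
      (mul_nonneg hA20.le hA40), hkey]
  have hq3 : A2^2 ≤ 16*P*A4 := by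
    have hstep : A2^2 * A2^2 ≤ (16*P*A4) * A2^2 := by nlinarith [hq2]
    exact le_of_mul_le_mul_right hstep (pow_pos hA20 2)
  have hq4 : (mR/24)^2 ≤ A2^2 := pow_le_pow_left₀ (by positivity) hA2lb 2
  have hq5 : 16*P*A4 ≤ 16*P*(3*mR^2) := mul_le_mul_of_nonneg_left hA4ub (by linarith)
  have hq6 : mR^2/576 ≤ 48*P*mR^2 := by nlinarith [hq3, hq4, hq5]
  nlinarith [hq6, mul_pos hm0 hm0]

-- from t12.lean
set_option maxHeartbeats 1000000 in
lemma core (m : ℕ) (hm : 1 ≤ m) {ε : ℝ} (hε0 : 0 < ε) (hε2 : ε ≤ 1/2)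
    (b : Fin m → ℝ) (hb0 : ∀ t, 1/2 ≤ b t) (hb1 : ∀ t, b t ≤ 1)
    {κ : ℝ} (hκ0 : 0 ≤ κ) (hbκ : ∀ t, 1 - b t ≤ κ)
    (c' : ℝ)
    (hc1 : (∫ x : Fin m → ℝ, (∑ t, x t) ∂Measure.pi (fun t => mix ε (b t))) ≤ c')
    (hc2 : c' ≤ m / 2)
    (hsmall : ((m:ℝ) * (ε * κ))^2 ≤ (m:ℝ) / 221184) :
    1/27648 ≤ ((Measure.pi fun t => mix ε (b t)) {x | c' < ∑ t, x t}).toReal := by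
  set μ : Fin m → Measure ℝ := fun t => mix ε (b t) with hμ
  have hbt0 : ∀ t, 0 < b t := fun t => lt_of_lt_of_le (by norm_num) (hb0 t)
  haveI inst : ∀ t, IsProbabilityMeasure (μ t) :=
    fun t => isProb_mix hε0.le (by linarith) (hbt0 t)
  haveI : IsProbabilityMeasure (Measure.pi μ) := inferInstance
  set c : Fin m → ℝ := fun t => ((1 - ε) + ε * b t)/2 with hcdef
  have hmean : ∀ t, ∫ y, y ∂μ t = c t :=
    fun t => mix_mean hε0.le (by linarith) (hbt0 t)
  set g : Fin m → ℝ → ℝ := fun t y => y - c t with hgdef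
  have hgmeas : ∀ t, Measurable (g t) := fun t => measurable_id.sub measurable_const
  have hg0 : ∀ t, ∫ y, g t y ∂μ t = 0 :=
    fun t => mix_centered_mean hε0.le (by linarith) (hbt0 t)
  have hc0 : ∀ t, 0 ≤ c t ∧ c t ≤ 1/2 := by
    intro t
    constructor
    · have := hbt0 t; simp only [hcdef]; nlinarith
    · have := hb1 t; simp only [hcdef]; nlinarith
  have hgb : ∀ t, ∀ᵐ y ∂μ t, |g t y| ≤ 1 := by
    intro t
    filter_upwards [mix_ae_Icc (ε := ε) (hbt0 t) (hb1 t)] with y hy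
    rw [abs_le]
    exact ⟨by simp only [hgdef]; linarith [hy.1, (hc0 t).2],
      by simp only [hgdef]; linarith [hy.2, (hc0 t).1]⟩
  -- variance bounds
  have hV1 : ∀ t, 1/24 ≤ ∫ y, (g t y)^2 ∂μ t :=
    fun t => mix_var_lb hε0.le hε2 (hb0 t) (hb1 t)
  have hV2 : ∀ t, ∫ y, (g t y)^2 ∂μ t ≤ 1 :=
    fun t => le_of_abs_le (moment_bdd μ g hgb t 2)
  set X : (Fin m → ℝ) → ℝ := fun x => ∑ t, g t (x t) with hXdef
  have hXmeas : Measurable X :=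
    Finset.measurable_sum _ fun t _ => (hgmeas t).comp (measurable_pi_apply t)
  have hae : ∀ᵐ x ∂Measure.pi μ, ∀ t, |g t (x t)| ≤ 1 :=
    pi_eval_ae μ (s := fun t => {y | |g t y| ≤ 1})
      (fun t => measurableSet_le (hgmeas t).abs measurable_const) hgb
  have haeX : ∀ᵐ x ∂Measure.pi μ, |X x| ≤ (m:ℝ) := by
    filter_upwards [hae] with x hx
    calc |X x| ≤ ∑ t, |g t (x t)| := Finset.abs_sum_le_sum_abs _ _
    _ ≤ ∑ _t : Fin m, (1:ℝ) := Finset.sum_le_sum fun t _ => hx t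
    _ = m := by simp
  -- moments of X
  set A1 := ∫ x, |X x| ∂Measure.pi μ with hA1def
  set A2 := ∫ x, (X x)^2 ∂Measure.pi μ with hA2def
  set A3 := ∫ x, |X x| * (X x)^2 ∂Measure.pi μ with hA3def
  set A4 := ∫ x, (X x)^4 ∂Measure.pi μ with hA4def
  have hA2m := sq_moment μ g hgmeas hg0 hgb
  have hA2lb : (m:ℝ)/24 ≤ A2 := by
    rw [hA2def, hA2m]
    calc (m:ℝ)/24 = ∑ _t : Fin m, (1/24 : ℝ) := by
          simp [Finset.sum_const]; ring
    _ ≤ ∑ t, ∫ y, (g t y)^2 ∂μ t := Finset.sum_le_sum fun t _ => hV1 t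
  have hA2ub : A2 ≤ m := by
    rw [hA2def, hA2m]
    calc (∑ t, ∫ y, (g t y)^2 ∂μ t) ≤ ∑ _t : Fin m, (1:ℝ) :=
          Finset.sum_le_sum fun t _ => hV2 t
    _ = m := by simp
  have hA4ub : A4 ≤ 3 * (m:ℝ)^2 := quad_moment μ g hgmeas hg0 hgb
  have hA10 : 0 ≤ A1 := integral_nonneg fun x => abs_nonneg _
  have hA30 : 0 ≤ A3 := integral_nonneg fun x => mul_nonneg (abs_nonneg _) (sq_nonneg _)
  have hA40 : 0 ≤ A4 := integral_nonneg fun x => by positivity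
  -- integrability of powers
  have hm1 : (1:ℝ) ≤ m := by exact_mod_cast hm
  have hXint : Integrable X (Measure.pi μ) := int_of_bdd hXmeas haeX
  have hXaint : Integrable (fun x => |X x|) (Measure.pi μ) := hXint.abs
  have hX2int : Integrable (fun x => (X x)^2) (Measure.pi μ) := by
    refine int_of_bdd (hXmeas.pow_const 2) (C := (m:ℝ)^2) ?_
    filter_upwards [haeX] with x hx
    rw [abs_pow]
    exact pow_le_pow_left₀ (abs_nonneg _) hx 2
  have hX3int : Integrable (fun x => |X x| * (X x)^2) (Measure.pi μ) := by
    refine int_of_bdd (hXmeas.abs.mul (hXmeas.pow_const 2)) (C := (m:ℝ)^3) ?_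
    filter_upwards [haeX] with x hx
    rw [abs_mul, abs_abs, abs_pow]
    calc |X x| * |X x|^2 = |X x|^3 := by ring
    _ ≤ (m:ℝ)^3 := pow_le_pow_left₀ (abs_nonneg _) hx 3
  have hX4int : Integrable (fun x => (X x)^4) (Measure.pi μ) := by
    refine int_of_bdd (hXmeas.pow_const 4) (C := (m:ℝ)^4) ?_
    filter_upwards [haeX] with x hx
    rw [abs_pow]
    exact pow_le_pow_left₀ (abs_nonneg _) hx 4
  -- Cauchy-Schwarz chain
  have hcs1 : A2^2 ≤ A1 * A3 := by
    have hu2 : (fun x => (Real.sqrt |X x|)^2) = fun x => |X x| := by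
      funext x; exact Real.sq_sqrt (abs_nonneg _)
    have hv2 : (fun x => (|X x| * Real.sqrt |X x|)^2) = fun x => |X x| * (X x)^2 := by
      funext x
      have h := Real.sq_sqrt (abs_nonneg (X x))
      calc (|X x| * Real.sqrt |X x|)^2 = |X x|^2 * (Real.sqrt |X x|)^2 := by ring
      _ = |X x|^2 * |X x| := by rw [h]
      _ = |X x| * (X x)^2 := by rw [sq_abs]; ring
    have huv : (fun x => (Real.sqrt |X x|) * (|X x| * Real.sqrt |X x|)) = fun x => (X x)^2 := by
      funext x
      have h := Real.sq_sqrt (abs_nonneg (X x))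
      calc (Real.sqrt |X x|) * (|X x| * Real.sqrt |X x|)
          = (Real.sqrt |X x|)^2 * |X x| := by ring
      _ = |X x| * |X x| := by rw [h]
      _ = (X x)^2 := by rw [← sq_abs]; ring
    have := my_cs (Measure.pi μ) (fun x => Real.sqrt |X x|) (fun x => |X x| * Real.sqrt |X x|)
      (by rw [hu2]; exact hXaint) (by rw [hv2]; exact hX3int) (by rw [huv]; exact hX2int)
    rw [hu2, hv2, huv] at this
    exact this
  have hcs2 : A3^2 ≤ A2 * A4 := by
    have hu2 : (fun x => (|X x|)^2) = fun x => (X x)^2 := by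
      funext x; rw [sq_abs]
    have hv2 : (fun x => ((X x)^2)^2) = fun x => (X x)^4 := by
      funext x; ring
    have := my_cs (Measure.pi μ) (fun x => |X x|) (fun x => (X x)^2)
      (by rw [hu2]; exact hX2int) (by rw [hv2]; exact hX4int) hX3int
    rw [hu2, hv2] at this
    exact this
  -- expected value of the sum
  have hintc : ∀ t, Integrable (fun x : Fin m → ℝ => x t) (Measure.pi μ) := by
    intro t
    refine int_of_bdd (measurable_pi_apply t) (C := 1) ?_
    have h01 : ∀ᵐ x ∂Measure.pi μ, ∀ s, x s ∈ Set.Icc (0:ℝ) 1 :=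
      pi_eval_ae μ (fun s => measurableSet_Icc) (fun s => mix_ae_Icc (hbt0 s) (hb1 s))
    filter_upwards [h01] with x hx
    rw [abs_le]
    exact ⟨by linarith [(hx t).1], (hx t).2⟩
  have hEs : ∫ x : Fin m → ℝ, (∑ t, x t) ∂Measure.pi μ = ∑ t, c t := by
    rw [integral_finset_sum _ fun t _ => hintc t]
    exact Finset.sum_congr rfl fun t _ => by rw [integral_pi_eval μ t, hmean t]
  rw [hEs] at hc1
  set tv := c' - ∑ t, c t with htvdef
  have htv0 : 0 ≤ tv := by rw [htvdef]; linarith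
  have htv_ub : 2 * tv ≤ (m:ℝ) * (ε * κ) := by
    have h1 : ∀ t, 1/2 - c t ≤ ε * κ / 2 := by
      intro t
      simp only [hcdef]
      nlinarith [hbκ t, hε0.le]
    have h2 : (m:ℝ)/2 - ∑ t, c t ≤ m * (ε*κ)/2 := by
      have := Finset.sum_le_sum (s := Finset.univ) fun t (_ : t ∈ Finset.univ) => h1 t
      rw [Finset.sum_sub_distrib] at this
      simp only [Finset.sum_const, Finset.card_univ, Fintype.card_fin, nsmul_eq_mul] at this
      linarith
    rw [htvdef]
    linarith
  have hεκ0 : 0 ≤ (m:ℝ) * (ε * κ) := by positivity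
  have htv2 : 4 * tv^2 ≤ (m:ℝ) / 221184 := by nlinarith
  -- mean of X is zero
  have hgint : ∀ t, Integrable (fun x : Fin m → ℝ => g t (x t)) (Measure.pi μ) := by
    intro t
    refine int_of_bdd (f := fun x : Fin m → ℝ => g t (x t))
      ((hgmeas t).comp (measurable_pi_apply t)) (C := 1) ?_
    filter_upwards [hae] with x hx
    exact hx t
  have hX0 : ∫ x, X x ∂Measure.pi μ = 0 := by
    have hXeq : X = fun x : Fin m → ℝ => ∑ t, g t (x t) := hXdef
    rw [hXeq, integral_finset_sum _ fun t _ => hgint t]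
    have hz : ∀ t : Fin m, ∫ x : Fin m → ℝ, g t (x t) ∂Measure.pi μ = 0 := by
      intro t
      have he : (fun x : Fin m → ℝ => g t (x t)) = fun x => x t - c t := rfl
      rw [he, integral_sub (hintc t) (integrable_const _), integral_pi_eval μ t, hmean t,
        integral_const, probReal_univ]
      simp
    simp [hz]
  have h4t : 4*tv ≤ A1 :=
    numer1 m A1 A2 A3 A4 tv hm1 hA2lb hA4ub hA10 hA30 hA40 hcs1 hcs2 htv0 htv2
  have htail := tail_lb hXmeas haeX hX0 htv0 (by linarith)
  rw [← hA1def, ← hA2def] at htail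
  have hPset : {x : Fin m → ℝ | tv < X x} = {x : Fin m → ℝ | c' < ∑ t, x t} := by
    ext x
    simp only [Set.mem_setOf_eq, hXdef, hgdef]
    rw [Finset.sum_sub_distrib]
    constructor <;> intro h <;> [linarith; linarith]
  rw [hPset] at htail
  set P := ((Measure.pi μ) {x | c' < ∑ t, x t}).toReal with hPdef
  have hP0 : 0 ≤ P := ENNReal.toReal_nonneg
  exact numer2 m A1 A2 A3 A4 tv P hm1 hA2lb hA4ub hA10 hA30 hA40 hP0 hcs1 hcs2 htv0 h4t htail

-- from t14.lean
/-- **Proposition 3.3, part 2 (the sum test is powerless past the boundary).**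
Let `0 < p, q < 1` with `p + q > 1/2`, `ε_m = m^{-p}`, and `1 - m^{-q} ≤ a m t ≤ 1` for all
`m ≥ 2`, `1 ≤ t ≤ m`.  With `s_m(ζ) = ∑_t ζ_t`, `E0 s_m = m/2` and
`E1 s_m = ∫ s_m dP1_m`, for any sequence of critical values `c'_m` with
`E1 s_m ≤ c'_m ≤ E0 s_m`, the power of the sum test is bounded away from `1`:
`limsup_m P1_m(s_m ≤ c'_m) < 1`. -/
theorem sum_test_powerless (p q : ℝ) (hp0 : 0 < p) (hp1 : p < 1)
    (hq0 : 0 < q) (hq1 : q < 1) (hpq : p + q > 1 / 2)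
    (a : (m : ℕ) → Fin m → ℝ)
    (ha0 : ∀ m : ℕ, 2 ≤ m → ∀ t, 1 - (m : ℝ) ^ (-q) ≤ a m t)
    (ha1 : ∀ m, 2 ≤ m → ∀ t, a m t ≤ 1)
    (c' : ℕ → ℝ)
    (hc : ∀ m : ℕ, 2 ≤ m →
      (∫ ζ, (∑ t, ζ t) ∂(altLaw m ((m : ℝ) ^ (-p)) (a m))) ≤ c' m ∧ c' m ≤ (m : ℝ) / 2) :
    limsup
      (fun m : ℕ => (altLaw m ((m : ℝ) ^ (-p)) (a m) {ζ | ∑ t, ζ t ≤ c' m}).toReal)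
      atTop < 1 := by
  have hδ : ∀ᶠ m : ℕ in atTop,
      (altLaw m ((m : ℝ) ^ (-p)) (a m) {ζ | ∑ t, ζ t ≤ c' m}).toReal ≤ 1 - 1/27648 := by
    have ev1 : ∀ᶠ m : ℕ in atTop, ((m:ℝ))^(-p) < 1/2 :=
      ((tendsto_rpow_neg_atTop hp0).comp tendsto_natCast_atTop_atTop).eventually_lt_const
        (by norm_num)
    have ev2 : ∀ᶠ m : ℕ in atTop, ((m:ℝ))^(-q) < 1/2 :=
      ((tendsto_rpow_neg_atTop hq0).comp tendsto_natCast_atTop_atTop).eventually_lt_const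
        (by norm_num)
    have hexp : (0:ℝ) < 2*p + 2*q - 1 := by linarith
    have ev3 : ∀ᶠ m : ℕ in atTop, ((m:ℝ))^(-(2*p + 2*q - 1)) < 1/221184 :=
      ((tendsto_rpow_neg_atTop hexp).comp tendsto_natCast_atTop_atTop).eventually_lt_const
        (by norm_num)
    filter_upwards [ev1, ev2, ev3, eventually_ge_atTop 2] with m h1 h2 h3 h4
    have hm0 : (0:ℝ) < m := by
      have : (2:ℝ) ≤ m := by exact_mod_cast h4
      linarith
    set ε := (m:ℝ)^(-p) with hεdef
    set κ := (m:ℝ)^(-q) with hκdef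
    have hε0 : 0 < ε := Real.rpow_pos_of_pos hm0 _
    have hκp : 0 < κ := Real.rpow_pos_of_pos hm0 _
    have hb0 : ∀ t, 1/2 ≤ a m t := fun t => by linarith [ha0 m h4 t]
    have hbκ : ∀ t, 1 - a m t ≤ κ := fun t => by linarith [ha0 m h4 t]
    have hsmall : ((m:ℝ) * (ε * κ))^2 ≤ (m:ℝ) / 221184 := by
      have hr : (m:ℝ) * ε^2 * κ^2 = (m:ℝ)^(-(2*p + 2*q - 1)) := by
        rw [hεdef, hκdef, pow_two, pow_two, ← Real.rpow_add hm0, ← Real.rpow_add hm0]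
        nth_rewrite 1 [← Real.rpow_one (m:ℝ)]
        rw [← Real.rpow_add hm0, ← Real.rpow_add hm0]
        congr 1
        ring
      have h5 : (m:ℝ) * ε^2 * κ^2 ≤ 1/221184 := by rw [hr]; linarith
      calc ((m:ℝ) * (ε * κ))^2 = (m:ℝ) * ((m:ℝ) * ε^2 * κ^2) := by ring
      _ ≤ (m:ℝ) * (1/221184) := mul_le_mul_of_nonneg_left h5 hm0.le
      _ = (m:ℝ)/221184 := by ring
    have hcore := core m (by omega) hε0 h1.le (a m) hb0 (ha1 m h4) hκp.le hbκ (c' m)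
      (by have := (hc m h4).1; simpa [altLaw] using this) (hc m h4).2 hsmall
    -- instances
    haveI : ∀ t : Fin m, IsProbabilityMeasure (mix ε (a m t)) :=
      fun t => isProb_mix hε0.le (by linarith) (by linarith [hb0 t])
    haveI : IsProbabilityMeasure (altLaw m ε (a m)) := by
      rw [altLaw]; infer_instance
    -- complement
    set S := {ζ : Fin m → ℝ | ∑ t, ζ t ≤ c' m} with hSdef
    have hSm : MeasurableSet S :=
      measurableSet_le (Finset.measurable_sum _ fun t _ => measurable_pi_apply t)
        measurable_const
    have hco : Sᶜ = {x : Fin m → ℝ | c' m < ∑ t, x t} := by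
      ext x; simp [hSdef, not_le]
    have hsum := measure_add_measure_compl (μ := altLaw m ε (a m)) hSm
    rw [measure_univ] at hsum
    have h6 : (altLaw m ε (a m) S).toReal + (altLaw m ε (a m) Sᶜ).toReal = 1 := by
      rw [← ENNReal.toReal_add (measure_ne_top _ _) (measure_ne_top _ _), hsum]
      simp
    have h7 : 1/27648 ≤ (altLaw m ε (a m) Sᶜ).toReal := by
      rw [hco]
      exact hcore
    linarith
  have hcb : IsCoboundedUnder (· ≤ ·) atTop
      (fun m : ℕ => (altLaw m ((m : ℝ) ^ (-p)) (a m) {ζ | ∑ t, ζ t ≤ c' m}).toReal) :=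
    isCoboundedUnder_le_of_eventually_le atTop
      (Eventually.of_forall fun m => ENNReal.toReal_nonneg)
  refine lt_of_le_of_lt (limsup_le_of_le hcb hδ) (by norm_num)
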